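/- Let p be an odd prime and G = S_p, the symmetric group on p letters, and k an algebraically closed field of characteristic p. Then H^1(G, V) = 0 for every irreducible kG-module V of dimension greater than p. -/

import Mathlib

open CategoryTheory groupCohomology

/-- Let `p` be an odd prime, `G = S_p` the symmetric group on `p`
letters, and `k` an algebraically closed field of characteristic `p`. Then
`H^1(G, V) = 0` for every irreducible `kG`-module `V` of dimension greater than `p`. -/
theorem stmt12 (p : ℕ) (hp : p.Prime) (hodd : Odd p)
    {k : Type} [Field k] [IsAlgClosed k] [CharP k p]
    (V : Rep k (Equiv.Perm (Fin p))) [CategoryTheory.Simple V] [FiniteDimensional k V]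
    (hdim : p < Module.finrank k V) :
    CategoryTheory.Limits.IsZero (groupCohomology V 1) := by
  classical
  haveI : NeZero p := ⟨hp.ne_zero⟩
  set G := Equiv.Perm (Fin p) with hG
  set H := MulAction.stabilizer G (0 : Fin p) with hH
  letI : Fintype H := Fintype.ofFinite _
  letI : Fintype (MulAction.orbit G (0 : Fin p)) := Fintype.ofFinite _
  -- the stabilizer has cardinality (p-1)!
  have horb : MulAction.orbit G (0 : Fin p) = Set.univ := by
    ext x
    simp only [Set.mem_univ, iff_true, MulAction.mem_orbit_iff]
    exact ⟨Equiv.swap 0 x, Equiv.swap_apply_left 0 x⟩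
  have hcardorb : Fintype.card (MulAction.orbit G (0 : Fin p)) = p := by
    rw [Fintype.card_congr ((Equiv.setCongr horb).trans (Equiv.Set.univ (Fin p)))]
    exact Fintype.card_fin p
  have hcardH : Fintype.card H = (p - 1).factorial := by
    have h1 := MulAction.card_orbit_mul_card_stabilizer_eq_card_group G (0 : Fin p)
    rw [hcardorb, Fintype.card_perm, Fintype.card_fin] at h1
    have h2 : p * (p-1).factorial = p.factorial := Nat.mul_factorial_pred hp.ne_zero
    exact Nat.eq_of_mul_eq_mul_left hp.pos (by rw [h2, ← h1])
  have hnz : ((Fintype.card H : k)) ≠ 0 := by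
    rw [hcardH]
    rw [Ne, CharP.cast_eq_zero_iff k p]
    intro h0
    have h1 := (Nat.Prime.dvd_factorial hp).1 h0
    have h2 := hp.two_le
    omega
  -- every cocycle is a coboundary
  have key : ∀ f : cocycles₁ V, (f : G → V) ∈ coboundaries₁ V := by
    intro f
    have hf := (mem_cocycles₁_iff (f : G → V)).1 f.2
    set S : V := ∑ h : H, (f : G → V) (h : G) with hS
    set v : V := -((Fintype.card H : k))⁻¹ • S with hv
    -- f is cohomologous to a cocycle vanishing on H
    have hsum : ∀ h₁ : H, (Fintype.card H : k) • (f : G → V) ↑h₁ = S - V.ρ ↑h₁ S := by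
      intro h₁
      have e1 : S = ∑ h : H, (f : G → V) ((h₁ : G) * (h : G)) := by
        rw [hS]
        exact (Fintype.sum_equiv (Equiv.mulLeft h₁) _ _ (fun x => rfl)).symm
      have e2 : ∑ h : H, (f : G → V) ((h₁ : G) * (h : G))
          = V.ρ ↑h₁ S + (Fintype.card H) • (f : G → V) ↑h₁ := by
        simp only [hf]
        rw [Finset.sum_add_distrib, ← map_sum, Finset.sum_const, Finset.card_univ, hS]
      rw [Nat.cast_smul_eq_nsmul]
      rw [e2] at e1
      rw [eq_sub_iff_add_eq]
      conv_rhs => rw [e1]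
      abel
    have hfix : ∀ h₁ : H, (f : G → V) ↑h₁ = V.ρ ↑h₁ v - v := by
      intro h₁
      have : V.ρ ↑h₁ v - v = ((Fintype.card H : k))⁻¹ • (S - V.ρ ↑h₁ S) := by
        rw [hv, map_smul]
        module
      rw [this, ← hsum h₁, smul_smul, inv_mul_cancel₀ hnz, one_smul]
    set f' : G → V := fun g => (f : G → V) g - (V.ρ g v - v) with hf'
    have hf'c : ∀ g₁ g₂ : G, f' (g₁ * g₂) = V.ρ g₁ (f' g₂) + f' g₁ := by
      intro g₁ g₂
      simp only [hf', hf g₁ g₂, map_mul, map_sub, Module.End.mul_apply]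
      abel
    have hf'H : ∀ h : H, f' ↑h = 0 := fun h => by
      simp only [hf', hfix h, sub_self]
    have hconst : ∀ g₁ g₂ : G, g₁ 0 = g₂ 0 → f' g₁ = f' g₂ := by
      intro g₁ g₂ hgg
      have hmem : g₂⁻¹ * g₁ ∈ H := by
        rw [hH, MulAction.mem_stabilizer_iff]
        show (g₂⁻¹ * g₁) 0 = 0
        rw [Equiv.Perm.mul_apply, hgg, Equiv.Perm.inv_def, Equiv.symm_apply_apply]
      have : g₁ = g₂ * (g₂⁻¹ * g₁) := by rw [← mul_assoc, mul_inv_cancel, one_mul]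
      rw [this, hf'c g₂ (g₂⁻¹ * g₁), hf'H ⟨_, hmem⟩]
      simp
    set F : Fin p → V := fun x => f' (Equiv.swap 0 x) with hF
    have hA : ∀ g : G, f' g = F (g 0) := by
      intro g
      exact hconst g (Equiv.swap 0 (g 0)) (Equiv.swap_apply_left 0 (g 0)).symm
    have hF0 : F 0 = 0 := by
      have h1 : (1 : G) 0 = (0 : Fin p) := rfl
      have := hA 1
      rw [h1] at this
      rw [← this, hf']
      simp [cocycles₁_map_one]
    have hB : ∀ (g : G) (x : Fin p), F (g x) = V.ρ g (F x) + F (g 0) := by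
      intro g x
      have h1 : (g * Equiv.swap 0 x) 0 = g x := by
        rw [Equiv.Perm.mul_apply, Equiv.swap_apply_left]
      have h2 := hA (g * Equiv.swap 0 x)
      rw [h1] at h2
      rw [← h2, hf'c g (Equiv.swap 0 x), hA g]
    -- the span of the range of F is an invariant subspace of dimension ≤ p
    set W : Submodule k V := Submodule.span k (Set.range F) with hW
    have hWinv : ∀ (g : G) (w : V), w ∈ W → V.ρ g w ∈ W := by
      intro g w hw
      induction hw using Submodule.span_induction with
      | mem x hx =>
          obtain ⟨y, rfl⟩ := hx
          have : V.ρ g (F y) = F (g y) - F (g 0) := by rw [hB g y]; abel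
          rw [this]
          exact sub_mem (Submodule.subset_span ⟨g y, rfl⟩)
            (Submodule.subset_span ⟨g 0, rfl⟩)
      | zero => simp
      | add x y _ _ hx hy => rw [map_add]; exact add_mem hx hy
      | smul c x _ hx => rw [map_smul]; exact Submodule.smul_mem _ _ hx
    -- W is a subrepresentation, and by simplicity W = ⊥
    have hWbot : W = ⊥ := by
      by_contra hW0
      let ρW : Representation k G W :=
        { toFun := fun g => (V.ρ g).restrict (fun w hw => hWinv g w hw)
          map_one' := by ext w; simp [LinearMap.restrict_apply]
          map_mul' := by
            intro g₁ g₂; ext w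
            simp [LinearMap.restrict_apply, Module.End.mul_apply] }
      let ι : Rep.of ρW ⟶ V :=
        Rep.ofHom { W.subtype with isIntertwining' := fun g => by ext; rfl }
      haveI : Mono ι := by
        exact (Rep.mono_iff_injective ι).2 Subtype.val_injective
      obtain ⟨w, hwW, hwne⟩ := (Submodule.ne_bot_iff W).1 hW0
      have hι : ι ≠ 0 := by
        intro h0
        have : ι.hom ⟨w, hwW⟩ = (0 : Rep.of ρW ⟶ V).hom ⟨w, hwW⟩ := by rw [h0]
        simp only [Action.zero_hom] at this
        exact hwne this
      haveI : IsIso ι := isIso_of_mono_of_nonzero hι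
      have hsurj : Function.Surjective ι.hom :=
        (Rep.epi_iff_surjective ι).1 inferInstance
      have htop : W = ⊤ := by
        rw [← Submodule.range_subtype W]
        exact LinearMap.range_eq_top.2 hsurj
      have hle : Module.finrank k W ≤ p := by
        have := finrank_range_le_card (R := k) F
        simpa [Set.finrank, ← hW, Fintype.card_fin] using this
      rw [htop, finrank_top] at hle
      omega
    -- hence F = 0 and f is a coboundary
    have hFzero : ∀ x, F x = 0 := by
      intro x
      have : F x ∈ W := Submodule.subset_span ⟨x, rfl⟩
      rwa [hWbot, Submodule.mem_bot] at this
    refine ⟨v, funext fun g => ?_⟩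
    rw [d₀₁_hom_apply]
    have := hA g
    rw [hFzero (g 0)] at this
    have h2 : (f : G → V) g - (V.ρ g v - v) = 0 := this
    exact (sub_eq_zero.1 h2).symm
  have hsub : Subsingleton (groupCohomology.H1 V) := by
    refine ⟨fun a b => ?_⟩
    have h0 : ∀ c : groupCohomology.H1 V, c = 0 := fun c =>
      H1_induction_on c fun x => (H1π_eq_zero_iff x).2 (key x)
    rw [h0 a, h0 b]
  exact ModuleCat.isZero_of_subsingleton _
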